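/- arXiv:2404.15124 — 2 statements merged into one kernel-verified Lean document; each statement's English description precedes it below -/
import Mathlib

section
/- Let d ≥ 1 be an integer, γ ∈ (0,1), δ > 1, κ₁ > 0, and let θ and ε₁ > 0 satisfy (ε₁ + log 2)/(γ + γ/δ) < θ < log 2. Let ε₃ ∈ (0, min(θγ, δ ε₁)). Then there exists a constant c > 0 such that for every k ∈ ℕ, every u, v ∈ ( (1/2) e^{-(k+1)θ d}, (1/2) e^{-kθ d} ), and every r ∈ [0, √d · 2^{k+1}], one has e^{k d (min(θγ, δε₁) - ε₃)} · u^{-γ} · min(1, κ₁ v^{-γδ} (r + u^{-γ/d})^{-dδ}) ≥ c · e^{k d ε₃}. -/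
private lemma min_one_mul_aux {B s : ℝ} (hB : 0 < B) (hs : 0 < s) (hs1 : s ≤ 1) :
    min 1 B * s ≤ min 1 (B * s) := by
  rcases le_total B 1 with h | h
  · rw [min_eq_right h, min_eq_right (by nlinarith)]
  · rw [min_eq_left h]
    rw [le_min_iff]
    constructor
    · nlinarith
    · nlinarith

set_option maxHeartbeats 1000000 in
/-- Key computation in the proof of Proposition 3.7: for marks `u, v` in the `k`-th layer
and distance `r ≤ √d·2^(k+1)`, the expected number of connectors, proportional to
`e^{kd(min(θγ,δε₁)-ε₃)} u^{-γ} min(1, κ₁ v^{-γδ}(r+u^{-γ/d})^{-dδ})`, is at least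
`c·e^{kdε₃}` for a constant `c > 0`. -/
theorem connector_count_growth
    (d : ℕ) (hd : 1 ≤ d) (γ δ κ₁ θ ε₁ ε₃ : ℝ)
    (hγ : γ ∈ Set.Ioo (0 : ℝ) 1) (hδ : 1 < δ) (hκ₁ : 0 < κ₁) (hε₁ : 0 < ε₁)
    (hθ₁ : (ε₁ + Real.log 2) / (γ + γ / δ) < θ) (hθ₂ : θ < Real.log 2)
    (hε₃ : ε₃ ∈ Set.Ioo 0 (min (θ * γ) (δ * ε₁))) :
    ∃ c > 0, ∀ (k : ℕ) (u v r : ℝ),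
      u ∈ Set.Ioo ((1 / 2) * Real.exp (-((k : ℝ) + 1) * θ * d))
                  ((1 / 2) * Real.exp (-(k : ℝ) * θ * d)) →
      v ∈ Set.Ioo ((1 / 2) * Real.exp (-((k : ℝ) + 1) * θ * d))
                  ((1 / 2) * Real.exp (-(k : ℝ) * θ * d)) →
      r ∈ Set.Icc 0 (Real.sqrt d * 2 ^ (k + 1)) →
      Real.exp ((k : ℝ) * d * (min (θ * γ) (δ * ε₁) - ε₃)) * u ^ (-γ) *
          min 1 (κ₁ * v ^ (-(γ * δ)) * (r + u ^ (-(γ / (d : ℝ)))) ^ (-((d : ℝ) * δ)))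
        ≥ c * Real.exp ((k : ℝ) * d * ε₃) := by
  obtain ⟨hγ0, hγ1⟩ := hγ
  obtain ⟨hε₃0, hε₃m⟩ := hε₃
  have hδ0 : (0 : ℝ) < δ := lt_trans one_pos hδ
  have hd0 : (0 : ℝ) < (d : ℝ) := by exact_mod_cast hd
  have hd1 : (1 : ℝ) ≤ (d : ℝ) := by exact_mod_cast hd
  have hlog2 : (0 : ℝ) < Real.log 2 := Real.log_pos (by norm_num)
  have hθ0 : 0 < θ := lt_trans (by positivity) hθ₁
  have hθγ : θ * γ < Real.log 2 := by nlinarith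
  -- key consequence of the ultrasmallness assumption
  have hkey : δ * ε₁ + δ * Real.log 2 < θ * γ + θ * γ * δ := by
    have h1 : ε₁ + Real.log 2 < θ * (γ + γ / δ) := by
      rw [div_lt_iff₀ (by positivity)] at hθ₁
      linarith
    have h2 : θ * (γ + γ / δ) * δ = θ * γ * δ + θ * γ := by
      field_simp
    nlinarith
  set m : ℝ := min (θ * γ) (δ * ε₁) with hm
  have hmδ : m ≤ δ * ε₁ := min_le_right _ _
  set C : ℝ := 2 * (Real.sqrt d + 2) with hC
  have hC0 : (0 : ℝ) < C := by positivity
  set B : ℝ := κ₁ * (2 : ℝ) ^ (γ * δ) * C ^ (-((d : ℝ) * δ)) with hB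
  have hB0 : (0 : ℝ) < B := by positivity
  refine ⟨(2 : ℝ) ^ γ * min 1 B, by positivity, ?_⟩
  intro k u v r hu hv hr
  obtain ⟨hu1, hu2⟩ := hu
  obtain ⟨hv1, hv2⟩ := hv
  obtain ⟨hr0, hr1⟩ := hr
  have hk0 : (0 : ℝ) ≤ (k : ℝ) := Nat.cast_nonneg k
  have hexpk : (0 : ℝ) < Real.exp (-(k : ℝ) * θ * d) := Real.exp_pos _
  have hu0 : 0 < u := lt_trans (by positivity) hu1
  have hv0 : 0 < v := lt_trans (by positivity) hv1
  -- bound on u^(-γ)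
  have hU : (2 : ℝ) ^ γ * Real.exp ((k : ℝ) * d * (θ * γ)) ≤ u ^ (-γ) := by
    have h1 : ((1 / 2) * Real.exp (-(k : ℝ) * θ * d)) ^ (-γ) ≤ u ^ (-γ) :=
      Real.rpow_le_rpow_of_nonpos hu0 (le_of_lt hu2) (by linarith)
    have h2 : ((1 / 2 : ℝ) * Real.exp (-(k : ℝ) * θ * d)) ^ (-γ)
        = (2 : ℝ) ^ γ * Real.exp ((k : ℝ) * d * (θ * γ)) := by
      rw [Real.mul_rpow (by norm_num) (le_of_lt hexpk), one_div,
        Real.inv_rpow (by norm_num), ← Real.rpow_neg (by norm_num), neg_neg,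
        ← Real.exp_mul]
      ring_nf
    linarith [h2 ▸ h1]
  -- bound on v^(-(γ*δ))
  have hV : (2 : ℝ) ^ (γ * δ) * Real.exp ((k : ℝ) * d * (θ * γ * δ)) ≤ v ^ (-(γ * δ)) := by
    have h1 : ((1 / 2) * Real.exp (-(k : ℝ) * θ * d)) ^ (-(γ * δ)) ≤ v ^ (-(γ * δ)) :=
      Real.rpow_le_rpow_of_nonpos hv0 (le_of_lt hv2) (by nlinarith)
    have h2 : ((1 / 2 : ℝ) * Real.exp (-(k : ℝ) * θ * d)) ^ (-(γ * δ))
        = (2 : ℝ) ^ (γ * δ) * Real.exp ((k : ℝ) * d * (θ * γ * δ)) := by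
      rw [Real.mul_rpow (by norm_num) (le_of_lt hexpk), one_div,
        Real.inv_rpow (by norm_num), ← Real.rpow_neg (by norm_num), neg_neg,
        ← Real.exp_mul]
      ring_nf
    linarith [h2 ▸ h1]
  -- bound on r + u^(-(γ/d))
  have h2k : (0 : ℝ) < (2 : ℝ) ^ k := by positivity
  have hRU : r + u ^ (-(γ / (d : ℝ))) ≤ C * 2 ^ k := by
    have hu' : u ^ (-(γ / (d : ℝ))) ≤ 4 * 2 ^ k := by
      have h1 : u ^ (-(γ / (d : ℝ)))
          ≤ ((1 / 2) * Real.exp (-((k : ℝ) + 1) * θ * d)) ^ (-(γ / (d : ℝ))) :=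
        Real.rpow_le_rpow_of_nonpos (by positivity) (le_of_lt hu1)
          (neg_nonpos.mpr (by positivity))
      have h2 : ((1 / 2 : ℝ) * Real.exp (-((k : ℝ) + 1) * θ * d)) ^ (-(γ / (d : ℝ)))
          = (2 : ℝ) ^ (γ / (d : ℝ)) * Real.exp (((k : ℝ) + 1) * (θ * γ)) := by
        rw [Real.mul_rpow (by norm_num) (le_of_lt (Real.exp_pos _)), one_div,
          Real.inv_rpow (by norm_num), ← Real.rpow_neg (by norm_num), neg_neg,
          ← Real.exp_mul]
        have hd' : (d : ℝ) ≠ 0 := ne_of_gt hd0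
        congr 1
        field_simp
      have h3 : (2 : ℝ) ^ (γ / (d : ℝ)) ≤ 2 := by
        calc (2 : ℝ) ^ (γ / (d : ℝ)) ≤ (2 : ℝ) ^ (1 : ℝ) := by
              apply Real.rpow_le_rpow_of_exponent_le (by norm_num)
              rw [div_le_one hd0]; linarith
          _ = 2 := Real.rpow_one 2
      have h4 : Real.exp (((k : ℝ) + 1) * (θ * γ)) ≤ 2 * 2 ^ k := by
        have : Real.exp (((k : ℝ) + 1) * (θ * γ)) ≤ Real.exp (((k : ℝ) + 1) * Real.log 2) := by
          apply Real.exp_le_exp.mpr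
          have hk1 : (0 : ℝ) ≤ (k : ℝ) + 1 := by positivity
          exact mul_le_mul_of_nonneg_left (le_of_lt hθγ) hk1
        have h5 : Real.exp (((k : ℝ) + 1) * Real.log 2) = 2 * 2 ^ k := by
          have : ((k : ℝ) + 1) = ((k + 1 : ℕ) : ℝ) := by push_cast; ring
          rw [this, Real.exp_nat_mul, Real.exp_log (by norm_num), pow_succ]
          ring
        linarith
      have hep : 0 < Real.exp (((k : ℝ) + 1) * (θ * γ)) := Real.exp_pos _
      calc u ^ (-(γ / (d : ℝ)))
          ≤ (2 : ℝ) ^ (γ / (d : ℝ)) * Real.exp (((k : ℝ) + 1) * (θ * γ)) := h2 ▸ h1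
        _ ≤ 2 * Real.exp (((k : ℝ) + 1) * (θ * γ)) :=
            mul_le_mul_of_nonneg_right h3 (le_of_lt hep)
        _ ≤ 2 * (2 * 2 ^ k) := by linarith
        _ = 4 * 2 ^ k := by ring
    have hr' : r ≤ Real.sqrt d * 2 * 2 ^ k := by
      rw [pow_succ] at hr1; linarith
    have hs0 : (0 : ℝ) ≤ Real.sqrt d := Real.sqrt_nonneg _
    rw [hC]; nlinarith [hu', hr']
  have hRU0 : 0 < r + u ^ (-(γ / (d : ℝ))) := by positivity
  -- bound on the min term
  have hM : min 1 B * Real.exp ((k : ℝ) * d * (θ * γ * δ - δ * Real.log 2))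
      ≤ min 1 (κ₁ * v ^ (-(γ * δ)) * (r + u ^ (-(γ / (d : ℝ)))) ^ (-((d : ℝ) * δ))) := by
    set t : ℝ := (k : ℝ) * d * (θ * γ * δ - δ * Real.log 2) with ht
    have ht0 : t ≤ 0 := by
      have : θ * γ * δ - δ * Real.log 2 ≤ 0 := by nlinarith
      have hkd : (0 : ℝ) ≤ (k : ℝ) * d := by positivity
      nlinarith
    have hX : B * Real.exp t
        ≤ κ₁ * v ^ (-(γ * δ)) * (r + u ^ (-(γ / (d : ℝ)))) ^ (-((d : ℝ) * δ)) := by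
      have hpow : (C * 2 ^ k) ^ (-((d : ℝ) * δ))
          ≤ (r + u ^ (-(γ / (d : ℝ)))) ^ (-((d : ℝ) * δ)) :=
        Real.rpow_le_rpow_of_nonpos hRU0 hRU (neg_nonpos.mpr (by positivity))
      have hpow2 : (C * 2 ^ k : ℝ) ^ (-((d : ℝ) * δ))
          = C ^ (-((d : ℝ) * δ)) * Real.exp (-((k : ℝ) * d * (δ * Real.log 2))) := by
        rw [Real.mul_rpow (le_of_lt hC0) (le_of_lt h2k)]
        congr 1
        have : ((2 : ℝ) ^ k) = Real.exp ((k : ℝ) * Real.log 2) := by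
          rw [Real.exp_nat_mul, Real.exp_log (by norm_num)]
        rw [this, ← Real.exp_mul]
        ring_nf
      have hCpos : (0 : ℝ) < C ^ (-((d : ℝ) * δ)) := Real.rpow_pos_of_pos hC0 _
      have hVpos : (0 : ℝ) < (2 : ℝ) ^ (γ * δ) * Real.exp ((k : ℝ) * d * (θ * γ * δ)) := by
        positivity
      calc B * Real.exp t
          = κ₁ * ((2 : ℝ) ^ (γ * δ) * Real.exp ((k : ℝ) * d * (θ * γ * δ))) *
            (C ^ (-((d : ℝ) * δ)) * Real.exp (-((k : ℝ) * d * (δ * Real.log 2)))) := by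
            have hsplit : (k : ℝ) * d * (θ * γ * δ - δ * Real.log 2)
                = (k : ℝ) * d * (θ * γ * δ) + -((k : ℝ) * d * (δ * Real.log 2)) := by ring
            rw [hB, ht, hsplit, Real.exp_add]
            ring
        _ ≤ κ₁ * v ^ (-(γ * δ)) *
            (C ^ (-((d : ℝ) * δ)) * Real.exp (-((k : ℝ) * d * (δ * Real.log 2)))) := by
            apply mul_le_mul_of_nonneg_right _ (by positivity)
            exact mul_le_mul_of_nonneg_left hV (le_of_lt hκ₁)
        _ = κ₁ * v ^ (-(γ * δ)) * (C * 2 ^ k : ℝ) ^ (-((d : ℝ) * δ)) := by rw [hpow2]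
        _ ≤ κ₁ * v ^ (-(γ * δ)) * (r + u ^ (-(γ / (d : ℝ)))) ^ (-((d : ℝ) * δ)) := by
            apply mul_le_mul_of_nonneg_left hpow
            positivity
    calc min 1 B * Real.exp t ≤ min 1 (B * Real.exp t) :=
          min_one_mul_aux hB0 (Real.exp_pos t) (Real.exp_le_one_iff.mpr ht0)
      _ ≤ _ := min_le_min le_rfl hX
  -- assemble
  have hexp1 : (0 : ℝ) < Real.exp ((k : ℝ) * d * (m - ε₃)) := Real.exp_pos _
  have hfinal : (2 : ℝ) ^ γ * min 1 B * Real.exp ((k : ℝ) * d * ε₃)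
      ≤ Real.exp ((k : ℝ) * d * (m - ε₃)) *
        ((2 : ℝ) ^ γ * Real.exp ((k : ℝ) * d * (θ * γ))) *
        (min 1 B * Real.exp ((k : ℝ) * d * (θ * γ * δ - δ * Real.log 2))) := by
    have hEq : Real.exp ((k : ℝ) * d * (m - ε₃)) *
        ((2 : ℝ) ^ γ * Real.exp ((k : ℝ) * d * (θ * γ))) *
        (min 1 B * Real.exp ((k : ℝ) * d * (θ * γ * δ - δ * Real.log 2)))
        = (2 : ℝ) ^ γ * min 1 B *
          Real.exp ((k : ℝ) * d * (m - ε₃ + θ * γ + (θ * γ * δ - δ * Real.log 2))) := by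
      have hsplit : (k : ℝ) * d * (m - ε₃ + θ * γ + (θ * γ * δ - δ * Real.log 2))
          = (k : ℝ) * d * (m - ε₃) + (k : ℝ) * d * (θ * γ)
            + (k : ℝ) * d * (θ * γ * δ - δ * Real.log 2) := by ring
      rw [hsplit, Real.exp_add, Real.exp_add]
      ring
    rw [hEq]
    have hE : ε₃ ≤ m - ε₃ + θ * γ + (θ * γ * δ - δ * Real.log 2) := by linarith
    have : Real.exp ((k : ℝ) * d * ε₃)
        ≤ Real.exp ((k : ℝ) * d * (m - ε₃ + θ * γ + (θ * γ * δ - δ * Real.log 2))) := by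
      apply Real.exp_le_exp.mpr
      have hkd : (0 : ℝ) ≤ (k : ℝ) * d := by positivity
      exact mul_le_mul_of_nonneg_left hE hkd
    have h2γ : (0 : ℝ) < (2 : ℝ) ^ γ := by positivity
    have hmin : (0 : ℝ) < min 1 B := lt_min one_pos hB0
    exact mul_le_mul_of_nonneg_left this (le_of_lt (mul_pos h2γ hmin))
  have hMnn : (0 : ℝ) ≤ min 1 B * Real.exp ((k : ℝ) * d * (θ * γ * δ - δ * Real.log 2)) := by
    have hmin : (0 : ℝ) < min 1 B := lt_min one_pos hB0
    positivity
  calc ((2 : ℝ) ^ γ * min 1 B) * Real.exp ((k : ℝ) * d * ε₃)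
      ≤ Real.exp ((k : ℝ) * d * (m - ε₃)) *
        ((2 : ℝ) ^ γ * Real.exp ((k : ℝ) * d * (θ * γ))) *
        (min 1 B * Real.exp ((k : ℝ) * d * (θ * γ * δ - δ * Real.log 2))) := hfinal
    _ ≤ Real.exp ((k : ℝ) * d * (m - ε₃)) * u ^ (-γ) *
        (min 1 B * Real.exp ((k : ℝ) * d * (θ * γ * δ - δ * Real.log 2))) := by
        apply mul_le_mul_of_nonneg_right _ hMnn
        exact mul_le_mul_of_nonneg_left hU (le_of_lt hexp1)
    _ ≤ Real.exp ((k : ℝ) * d * (m - ε₃)) * u ^ (-γ) *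
        min 1 (κ₁ * v ^ (-(γ * δ)) * (r + u ^ (-(γ / (d : ℝ)))) ^ (-((d : ℝ) * δ))) := by
        apply mul_le_mul_of_nonneg_left hM
        positivity
end

section
/- Let d ≥ 1 be an integer, ε ∈ (0,1), C' > 0, and c₀ ∈ (0, 1/(2 log 2)). For t > 1 set κ(t) = ⌈c₀ log t⌉, and define recursively ℓ₁(t) = ( ε t / (8 C' κ(t)³) )^{1/2} and ℓ_{j+1}(t) = ℓ_j(t) · ( 1/4 - ε/(8 κ(t)) )^{1/2} for 1 ≤ j < κ(t) (note 1/4 - ε/(8κ(t)) > 0 once t is large enough that κ(t) > ε/2). Then for every constant C > 0 there exists t₀ such that for all t ≥ t₀ one has ℓ_{κ(t)}(t)^d ≥ C (log t)³. -/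
open Real Filter Asymptotics

/-- The sequence of spatial scales from the proof of Proposition 3.4, zero-indexed:
`ellSeq ε C' κ t j` is `ℓ_{j+1}(t)`, where `ℓ₁(t) = (εt/(8C'κ³))^{1/2}` and
`ℓ_{j+1}(t) = ℓ_j(t)·(1/4 - ε/(8κ))^{1/2}`. -/
noncomputable def ellSeq (ε C' κ t : ℝ) : ℕ → ℝ
  | 0 => Real.sqrt (ε * t / (8 * C' * κ ^ 3))
  | j + 1 => ellSeq ε C' κ t j * Real.sqrt (1 / 4 - ε / (8 * κ))

private lemma ellSeq_closed (ε C' κ t : ℝ) (j : ℕ) :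
    ellSeq ε C' κ t j
      = Real.sqrt (ε * t / (8 * C' * κ ^ 3)) * Real.sqrt (1 / 4 - ε / (8 * κ)) ^ j := by
  induction j with
  | zero => simp [ellSeq]
  | succ n ih => rw [ellSeq, ih]; ring

private lemma eventually_log_pow_le (c β : ℝ) (hβ : 0 < β) :
    ∀ᶠ t in atTop, c * Real.log t ^ (9 : ℕ) ≤ t ^ β := by
  have h : (fun x : ℝ => Real.log x ^ (9 : ℝ)) =o[atTop] fun x : ℝ => x ^ β :=
    isLittleO_log_rpow_rpow_atTop 9 hβ
  have h2 := (h.const_mul_left c).def one_pos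
  filter_upwards [h2, eventually_ge_atTop (1 : ℝ)] with t ht ht1
  have ht0 : (0 : ℝ) ≤ t := le_trans zero_le_one ht1
  have hrw : Real.log t ^ (9 : ℝ) = Real.log t ^ (9 : ℕ) := by
    rw [← Real.rpow_natCast (Real.log t) 9]; norm_num
  rw [hrw] at ht
  have hnorm : ‖c * Real.log t ^ (9 : ℕ)‖ ≤ 1 * ‖t ^ β‖ := ht
  rw [one_mul, Real.norm_eq_abs, Real.norm_eq_abs, abs_of_nonneg (Real.rpow_nonneg ht0 β)]
    at hnorm
  exact le_trans (le_abs_self _) hnorm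

set_option maxHeartbeats 1000000 in
/-- Scale-sequence estimate from the proof of Proposition 3.4: with `κ(t) = ⌈c₀ log t⌉`
scales, the finest scale `ℓ_{κ(t)}(t)` still satisfies `ℓ_{κ(t)}(t)^d ≥ C (log t)³`
for any prescribed constant `C > 0`, provided `t` is large enough. -/
theorem finest_scale_lower_bound
    (d : ℕ) (hd : 1 ≤ d) (ε C' c₀ : ℝ)
    (hε : ε ∈ Set.Ioo (0 : ℝ) 1) (hC' : 0 < C')
    (hc₀ : c₀ ∈ Set.Ioo (0 : ℝ) (1 / (2 * Real.log 2))) :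
    ∀ C > 0, ∃ t₀ : ℝ, ∀ t ≥ t₀,
      (ellSeq ε C' (⌈c₀ * Real.log t⌉₊ : ℝ) t (⌈c₀ * Real.log t⌉₊ - 1)) ^ d
        ≥ C * (Real.log t) ^ 3 := by
  obtain ⟨hε0, hε1⟩ := hε
  obtain ⟨hc0, hc1⟩ := hc₀
  intro C hC
  have hlog2 : (0 : ℝ) < Real.log 2 := Real.log_pos (by norm_num)
  have hlog4 : Real.log 4 = 2 * Real.log 2 := by
    rw [show (4 : ℝ) = 2 ^ 2 by norm_num, Real.log_pow]; push_cast; ring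
  set γ : ℝ := c₀ * Real.log 4 with hγdef
  set β : ℝ := 1 - γ with hβdef
  have hβ : 0 < β := by
    have h1 : c₀ * (2 * Real.log 2) < 1 := by
      have := (lt_div_iff₀ (by positivity : (0:ℝ) < 2 * Real.log 2)).mp hc1
      linarith
    simp only [hβdef, hγdef, hlog4]; linarith
  set D : ℝ := 16 * C' * (c₀ + 1) ^ 3 * (1 + C) ^ 2 / ε with hDdef
  have hEv : ∀ᶠ t in atTop,
      (ellSeq ε C' (⌈c₀ * Real.log t⌉₊ : ℝ) t (⌈c₀ * Real.log t⌉₊ - 1)) ^ d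
        ≥ C * (Real.log t) ^ 3 := by
    filter_upwards [eventually_log_pow_le D β hβ,
      tendsto_log_atTop.eventually_ge_atTop 1, eventually_ge_atTop (1 : ℝ)]
      with t hkt hL1 ht1
    have ht0 : (0 : ℝ) < t := lt_of_lt_of_le one_pos ht1
    set L : ℝ := Real.log t with hLdef
    set n : ℕ := ⌈c₀ * L⌉₊ with hndef
    have hn1 : 1 ≤ n := Nat.one_le_iff_ne_zero.mpr (by
      simp only [hndef, ne_eq, Nat.ceil_eq_zero, not_le]
      positivity)
    set K : ℝ := (n : ℝ) with hKdef
    have hK1 : (1 : ℝ) ≤ K := by rw [hKdef]; exact_mod_cast hn1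
    have hK0 : (0 : ℝ) < K := lt_of_lt_of_le one_pos hK1
    have hKge : c₀ * L ≤ K := Nat.le_ceil _
    have hKle : K ≤ c₀ * L + 1 := (Nat.ceil_lt_add_one (by positivity)).le
    set q : ℝ := 1 / 4 - ε / (8 * K) with hqdef
    set s : ℝ := 1 - ε / (2 * K) with hsdef
    have hq : q = s / 4 := by rw [hqdef, hsdef]; ring
    have hεK : ε / (2 * K) ≤ 1 / 2 := by
      rw [div_le_div_iff₀ (by positivity) (by norm_num)]
      nlinarith
    have hεK0 : 0 ≤ ε / (2 * K) := by positivity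
    have hs_half : (1 : ℝ) / 2 ≤ s := by rw [hsdef]; linarith
    have hs0 : (0 : ℝ) ≤ s := le_trans (by norm_num) hs_half
    have hs1 : s ≤ 1 := by rw [hsdef]; linarith
    have hq0 : (0 : ℝ) < q := by rw [hq]; linarith
    -- Bernoulli
    have hbern : 1 - ε / 2 ≤ s ^ n := by
      have hb := one_add_mul_le_pow (a := -(ε / (2 * K))) (by linarith) n
      have heq : 1 + (n : ℝ) * -(ε / (2 * K)) = 1 - ε / 2 := by
        rw [← hKdef]; field_simp; ring
      have heq2 : 1 + -(ε / (2 * K)) = s := by rw [hsdef]; ring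
      rw [heq, heq2] at hb
      exact hb
    have hsn : (1 : ℝ) / 2 ≤ s ^ (n - 1) := by
      have h1 : s ^ n ≤ s ^ (n - 1) := pow_le_pow_of_le_one hs0 hs1 (Nat.sub_le n 1)
      nlinarith
    -- power of four bound
    have hfour : (4 : ℝ) ^ (n - 1) ≤ t ^ γ := by
      have hcast : ((n - 1 : ℕ) : ℝ) = K - 1 := by
        rw [hKdef, Nat.cast_sub hn1]; norm_num
      have h1 : ((n - 1 : ℕ) : ℝ) ≤ c₀ * L := by rw [hcast]; linarith
      calc (4 : ℝ) ^ (n - 1) = (4 : ℝ) ^ (((n - 1 : ℕ)) : ℝ) := (Real.rpow_natCast _ _).symm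
        _ ≤ (4 : ℝ) ^ (c₀ * L) :=
            Real.rpow_le_rpow_of_exponent_le (by norm_num) h1
        _ = t ^ γ := by
            rw [Real.rpow_def_of_pos (by norm_num : (0:ℝ) < 4),
              Real.rpow_def_of_pos ht0, ← hLdef, hγdef]
            congr 1; ring
    have htγ0 : (0 : ℝ) < t ^ γ := Real.rpow_pos_of_pos ht0 _
    set A : ℝ := ε * t / (8 * C' * K ^ 3) with hAdef
    have hA0 : (0 : ℝ) < A := by positivity
    set B : ℝ := 1 + C * L ^ 3 with hBdef
    have hL0 : (0 : ℝ) < L := by linarith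
    have hL3 : (1 : ℝ) ≤ L ^ 3 := by
      calc (1 : ℝ) = 1 ^ 3 := by norm_num
        _ ≤ L ^ 3 := pow_le_pow_left₀ zero_le_one hL1 3
    have hCL3 : C * 1 ≤ C * L ^ 3 := mul_le_mul_of_nonneg_left hL3 hC.le
    have hB1 : (1 : ℝ) ≤ B := by rw [hBdef]; linarith
    have hB0 : (0 : ℝ) ≤ B := by linarith
    -- main inequality B^2 ≤ A * q^(n-1)
    have hK3 : K ^ 3 ≤ (c₀ + 1) ^ 3 * L ^ 3 := by
      have hKL : K ≤ (c₀ + 1) * L := by nlinarith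
      calc K ^ 3 ≤ ((c₀ + 1) * L) ^ 3 := pow_le_pow_left₀ hK0.le hKL 3
        _ = (c₀ + 1) ^ 3 * L ^ 3 := by ring
    have hB2 : B ^ 2 ≤ (1 + C) ^ 2 * L ^ 6 := by
      have hBL : B ≤ (1 + C) * L ^ 3 := by rw [hBdef]; nlinarith
      calc B ^ 2 ≤ ((1 + C) * L ^ 3) ^ 2 := pow_le_pow_left₀ hB0 hBL 2
        _ = (1 + C) ^ 2 * L ^ 6 := by ring
    have hchain1 : B ^ 2 * (16 * C' * K ^ 3) ≤ ε * t ^ β := by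
      have h2 : ε * (D * L ^ 9) ≤ ε * t ^ β := by
        exact mul_le_mul_of_nonneg_left hkt hε0.le
      have h3 : ε * (D * L ^ 9) = 16 * C' * (c₀ + 1) ^ 3 * (1 + C) ^ 2 * L ^ 9 := by
        rw [hDdef]
        field_simp
      have h5 := mul_le_mul hB2 hK3 (by positivity) (by positivity)
      have h4 : B ^ 2 * (16 * C' * K ^ 3)
          ≤ 16 * C' * (c₀ + 1) ^ 3 * (1 + C) ^ 2 * L ^ 9 := by
        calc B ^ 2 * (16 * C' * K ^ 3) = 16 * C' * (B ^ 2 * K ^ 3) := by ring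
          _ ≤ 16 * C' * ((1 + C) ^ 2 * L ^ 6 * ((c₀ + 1) ^ 3 * L ^ 3)) :=
              mul_le_mul_of_nonneg_left h5 (by positivity)
          _ = 16 * C' * (c₀ + 1) ^ 3 * (1 + C) ^ 2 * L ^ 9 := by ring
      linarith [h3 ▸ h2]
    have hq_low : (1 : ℝ) / 2 / t ^ γ ≤ q ^ (n - 1) := by
      rw [hq, div_pow]
      exact div_le_div₀ (pow_nonneg hs0 _) hsn (by positivity) hfour
    have ht_eq : A * ((1 : ℝ) / 2 / t ^ γ) = ε * t ^ β / (16 * C' * K ^ 3) := by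
      have htβ : t ^ β = t / t ^ γ := by
        rw [hβdef, Real.rpow_sub ht0, Real.rpow_one]
      rw [hAdef, htβ]
      field_simp
      ring
    have hmain : B ^ 2 ≤ A * q ^ (n - 1) := by
      calc B ^ 2 = B ^ 2 * (16 * C' * K ^ 3) / (16 * C' * K ^ 3) := by
            field_simp
        _ ≤ ε * t ^ β / (16 * C' * K ^ 3) := by
            apply div_le_div_of_nonneg_right hchain1 (by positivity)
        _ = A * ((1 : ℝ) / 2 / t ^ γ) := ht_eq.symm
        _ ≤ A * q ^ (n - 1) := mul_le_mul_of_nonneg_left hq_low hA0.le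
    -- conclude
    rw [ellSeq_closed]
    set v : ℝ := Real.sqrt (ε * t / (8 * C' * K ^ 3))
      * Real.sqrt (1 / 4 - ε / (8 * K)) ^ (n - 1) with hvdef
    have hv0 : 0 ≤ v := by positivity
    have hv2 : v ^ 2 = A * q ^ (n - 1) := by
      rw [hvdef, mul_pow, Real.sq_sqrt hA0.le, ← pow_mul, mul_comm (n - 1) 2, pow_mul,
        Real.sq_sqrt hq0.le]
    have hvB : B ≤ v := by
      apply le_of_pow_le_pow_left₀ two_ne_zero hv0
      rw [hv2]; exact hmain
    have hv1 : (1 : ℝ) ≤ v := le_trans hB1 hvB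
    have hvd : v ≤ v ^ d := le_self_pow₀ hv1 (by omega)
    calc C * L ^ 3 ≤ B := by rw [hBdef]; linarith
      _ ≤ v := hvB
      _ ≤ v ^ d := hvd
  exact eventually_atTop.mp hEv
end
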